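/- Let k ≥ 1, μ = 1, and for x ∈ (0, k) let y(x) be the unique positive root of F(y,x) = ∑_{i=0}^k ((x-i)/i!) y^i = 0. Then y is a convex function of x on (0, k): y''(x) ≥ 0 wherever the implicit function is twice differentiable. -/

import Mathlib

open Finset


private lemma aux_sum_id (N : ℕ) : 2 * ∑ i ∈ range N, (i:ℤ) = N*(N-1) := by
  induction N with
  | zero => simp
  | succ n ih => rw [Finset.sum_range_succ, mul_add]; push_cast; push_cast at ih; linarith

private lemma aux_sum_sq (N : ℕ) : 6 * ∑ i ∈ range N, (i:ℤ)^2 = N*(N-1)*(2*N-1) := by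
  induction N with
  | zero => simp
  | succ n ih => rw [Finset.sum_range_succ, mul_add]; push_cast; push_cast at ih; nlinarith [ih]

private lemma aux_sq_sum (m : ℕ) : 3 * ∑ i ∈ range (m+1), ((m:ℤ) - 2*i)^2 = (m:ℤ)*(m+1)*(m+2) := by
  have h1 : ∀ i : ℕ, ((m:ℤ) - 2*i)^2 = (m:ℤ)^2 - 4*(m:ℤ)*(i:ℤ) + 4*(i:ℤ)^2 := fun i => by ring
  rw [Finset.sum_congr rfl fun i _ => h1 i, Finset.sum_add_distrib, Finset.sum_sub_distrib,
    Finset.sum_const, Finset.card_range, ← Finset.mul_sum]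
  have h2 := aux_sum_id (m+1)
  have h3 := aux_sum_sq (m+1)
  have h4 : ∑ i ∈ range (m+1), 4*(i:ℤ)^2 = 4 * ∑ i ∈ range (m+1), (i:ℤ)^2 := by
    rw [Finset.mul_sum]
  rw [h4, nsmul_eq_mul]
  push_cast at h2 h3 ⊢
  linear_combination (-6*(m:ℤ))*h2 + 2*h3

private lemma cast_mul_pred_int (a : ℕ) : ((a*(a-1) : ℕ) : ℤ) = (a:ℤ)*((a:ℤ)-1) := by
  cases a with
  | zero => simp
  | succ n => push_cast [Nat.add_sub_cancel]; ring

private lemma cast_mul_pred_real (a : ℕ) : ((a*(a-1) : ℕ) : ℝ) = (a:ℝ)*((a:ℝ)-1) := by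
  cases a with
  | zero => simp
  | succ n => push_cast [Nat.add_sub_cancel]; ring

private lemma fact_step (n a b : ℕ) (hab : a ≤ b) (hb : b ≤ n) (ha : n ≤ 2*a) :
    a.factorial * (n-a).factorial ≤ b.factorial * (n-b).factorial := by
  revert hb
  induction b, hab using Nat.le_induction with
  | base => intro _; exact le_rfl
  | succ b hab ih =>
    intro hb1
    have hbn : b ≤ n := by omega
    refine (ih hbn).trans ?_
    have h1 : n - b = (n - (b+1)) + 1 := by omega
    rw [h1, Nat.factorial_succ, Nat.factorial_succ]
    have h2 : n - (b+1) + 1 ≤ b + 1 := by omega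
    calc b.factorial * ((n - (b+1) + 1) * (n - (b+1)).factorial)
        ≤ b.factorial * ((b+1) * (n - (b+1)).factorial) := by
          exact Nat.mul_le_mul_left _ (Nat.mul_le_mul_right _ h2)
      _ = (b+1) * b.factorial * (n - (b+1)).factorial := by ring

private lemma fact_mono (n i j : ℕ) (hi : i ≤ n) (hj : j ≤ n)
    (h : ((n:ℤ) - 2*i)^2 ≤ ((n:ℤ) - 2*j)^2) :
    i.factorial * (n-i).factorial ≤ j.factorial * (n-j).factorial := by
  set i' := max i (n-i) with hi'def
  set j' := max j (n-j) with hj'def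
  have hi'n : i' ≤ n := by omega
  have hni' : n ≤ 2*i' := by omega
  have hj'n : j' ≤ n := by omega
  have hnj' : n ≤ 2*j' := by omega
  have hFi : i.factorial * (n-i).factorial = i'.factorial * (n-i').factorial := by
    rcases le_total i (n-i) with hle | hle
    · have : i' = n - i := by omega
      rw [this, Nat.sub_sub_self hi, mul_comm]
    · have : i' = i := by omega
      rw [this]
  have hFj : j.factorial * (n-j).factorial = j'.factorial * (n-j').factorial := by
    rcases le_total j (n-j) with hle | hle
    · have : j' = n - j := by omega
      rw [this, Nat.sub_sub_self hj, mul_comm]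
    · have : j' = j := by omega
      rw [this]
  have hZi : ((n:ℤ) - 2*i)^2 = (2*(i':ℤ) - n)^2 := by
    rcases le_total i (n-i) with hle | hle
    · have h1 : i' = n - i := by omega
      have h2 : ((i':ℕ):ℤ) = (n:ℤ) - i := by rw [h1]; push_cast [hi]; ring
      rw [h2]; ring
    · have h1 : i' = i := by omega
      rw [h1]; ring
  have hZj : ((n:ℤ) - 2*j)^2 = (2*(j':ℤ) - n)^2 := by
    rcases le_total j (n-j) with hle | hle
    · have h1 : j' = n - j := by omega
      have h2 : ((j':ℕ):ℤ) = (n:ℤ) - j := by rw [h1]; push_cast [hj]; ring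
      rw [h2]; ring
    · have h1 : j' = j := by omega
      rw [h1]; ring
  rw [hZi, hZj] at h
  have hii : (2*(i':ℤ) - n) ≤ (2*(j':ℤ) - n) := by
    have h1 : (0:ℤ) ≤ 2*(i':ℤ) - n := by push_cast; omega
    have h2 : (0:ℤ) ≤ 2*(j':ℤ) - n := by push_cast; omega
    nlinarith [h, h1, h2]
  have hij : i' ≤ j' := by omega
  rw [hFi, hFj]
  exact fact_step n i' j' hij hj'n hni'

private lemma core_coeff (k n : ℕ) (hn : n ≤ 2*k) :
    0 ≤ ∑ i ∈ Finset.Icc (n-k) (min n k),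
      (((2*(((k-i)*(k-(n-i)) : ℕ):ℤ) - (((k-i)*(k-i-1) : ℕ):ℤ)) : ℤ):ℝ)
        / ((i.factorial : ℝ) * ((n-i).factorial : ℝ)) := by
  set l := n - k with hl
  set u := min n k with hu
  have hlu : l + u = n := by omega
  have hle : l ≤ u := by omega
  set I := Finset.Icc l u with hI
  set v : ℕ → ℝ := fun i => 1 / ((i.factorial : ℝ) * ((n-i).factorial : ℝ)) with hv
  have hvpos : ∀ i, 0 < v i := by
    intro i
    apply one_div_pos.mpr
    positivity
  set gz : ℕ → ℕ → ℤ := fun i j => 2*(((k-i)*(k-j) : ℕ):ℤ) - (((k-i)*(k-i-1) : ℕ):ℤ) with hgz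
  have hmemI : ∀ i ∈ I, l ≤ i ∧ i ≤ u := by
    intro i hi; rw [hI, Finset.mem_Icc] at hi; exact hi
  -- reflection
  have hrefl : ∀ F : ℕ → ℝ, ∑ i ∈ I, F i = ∑ i ∈ I, F (n - i) := by
    intro F
    refine Finset.sum_nbij' (fun i => n - i) (fun i => n - i) ?_ ?_ ?_ ?_ ?_
    · intro a ha; have := hmemI a ha; rw [hI, Finset.mem_Icc]; omega
    · intro a ha; have := hmemI a ha; rw [hI, Finset.mem_Icc]; omega
    · intro a ha; have := hmemI a ha; omega
    · intro a ha; have := hmemI a ha; omega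
    · intro a ha; have := hmemI a ha
      have e : n - (n - a) = a := by omega
      rw [e]
  -- the sum equals a symmetrized sum
  have hsym : (2:ℝ) * (∑ i ∈ I, (gz i (n-i) : ℝ) * v i)
      = ∑ i ∈ I, ((gz i (n-i) + gz (n-i) i : ℤ):ℝ) * v i := by
    have h2 : ∑ i ∈ I, (gz i (n-i) : ℝ) * v i = ∑ i ∈ I, (gz (n-i) i : ℝ) * v i := by
      rw [hrefl (fun i => (gz i (n-i) : ℝ) * v i)]
      apply Finset.sum_congr rfl
      intro i hi
      have hiu := hmemI i hi
      have e1 : n - (n - i) = i := by omega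
      rw [e1]
      have e2 : v (n - i) = v i := by
        rw [hv]; simp only []
        rw [e1, mul_comm]
      rw [e2]
    rw [two_mul]
    nth_rewrite 2 [h2]
    rw [← Finset.sum_add_distrib]
    apply Finset.sum_congr rfl
    intro i _
    push_cast
    ring
  -- pointwise integer identity
  set sz : ℤ := 2*(k:ℤ) - n with hsz
  have hptwise : ∀ i ∈ I, 2*(gz i (n-i) + gz (n-i) i) = sz^2 + 2*sz - 3*((n:ℤ)-2*i)^2 := by
    intro i hi
    have hiu := hmemI i hi
    have hik : i ≤ k := by omega
    have hin : i ≤ n := by omega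
    have hnik : n - i ≤ k := by omega
    have c1 : ((k-i : ℕ):ℤ) = (k:ℤ) - i := by omega
    have c2 : ((k-(n-i) : ℕ):ℤ) = (k:ℤ) - ((n:ℤ) - i) := by omega
    have c2' : ((n - i : ℕ):ℤ) = (n:ℤ) - i := by omega
    have c3 : (((k-i)*(k-i-1) : ℕ):ℤ) = ((k:ℤ)-i)*(((k:ℤ)-i)-1) := by
      rw [cast_mul_pred_int (k-i), c1]
    have c4 : (((k-(n-i))*(k-(n-i)-1) : ℕ):ℤ) = ((k:ℤ)-((n:ℤ)-i))*(((k:ℤ)-((n:ℤ)-i))-1) := by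
      rw [cast_mul_pred_int (k-(n-i)), c2]
    rw [hgz]
    simp only []
    push_cast [c1, c2, c3, c4]
    rw [hsz]
    ring
  -- antivary
  have hanti : AntivaryOn (fun i : ℕ => ((n:ℝ) - 2*(i:ℝ))^2) v ↑I := by
    intro i hi j hj hlt
    have hi' := hmemI i (Finset.mem_coe.mp hi)
    have hj' := hmemI j (Finset.mem_coe.mp hj)
    have hin : i ≤ n := by omega
    have hjn : j ≤ n := by omega
    clear hi hj
    have hfi : (0:ℝ) < (i.factorial : ℝ) * ((n-i).factorial : ℝ) := by positivity
    have hfj : (0:ℝ) < (j.factorial : ℝ) * ((n-j).factorial : ℝ) := by positivity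
    have hflt : (j.factorial : ℝ) * ((n-j).factorial : ℝ) < (i.factorial : ℝ) * ((n-i).factorial : ℝ) := by
      rw [hv] at hlt
      simp only [] at hlt
      exact lt_of_one_div_lt_one_div hfi hlt
    have hfltn : j.factorial * (n-j).factorial < i.factorial * (n-i).factorial := by
      exact_mod_cast hflt
    by_contra hcon
    push_neg at hcon
    have hz : ((n:ℤ) - 2*i)^2 < ((n:ℤ) - 2*j)^2 := by
      have : ((n:ℝ) - 2*i)^2 < ((n:ℝ) - 2*j)^2 := hcon
      exact_mod_cast this
    have := fact_mono n i j hin hjn (le_of_lt hz)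
    omega
  have hcheb := hanti.card_mul_sum_le_sum_mul_sum
  -- integer bound on sum of squares
  have hL2 : 3 * ∑ i ∈ I, ((n:ℤ)-2*i)^2 ≤ (sz^2 + 2*sz) * (I.card : ℤ) := by
    set m := u - l with hm
    have hcard : I.card = m + 1 := by rw [hI, Nat.card_Icc]; omega
    have hsum : ∑ i ∈ I, ((n:ℤ)-2*i)^2 = ∑ i ∈ range (m+1), ((m:ℤ) - 2*i)^2 := by
      rw [hI, ← Finset.Ico_add_one_right_eq_Icc, Finset.sum_Ico_eq_sum_range]
      have hcnt : u + 1 - l = m + 1 := by omega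
      rw [hcnt]
      apply Finset.sum_congr rfl
      intro i _
      have : (n:ℤ) - 2*((l + i : ℕ):ℤ) = (m:ℤ) - 2*i := by push_cast; omega
      rw [this]
    rw [hsum, hcard, aux_sq_sum m]
    have hms : (m:ℤ) ≤ sz := by rw [hsz]; push_cast; omega
    have hm0 : (0:ℤ) ≤ (m:ℤ) := by positivity
    have hsz0 : (0:ℤ) ≤ sz := by rw [hsz]; push_cast; omega
    have key : (0:ℤ) ≤ (sz - (m:ℤ)) * (sz + (m:ℤ) + 2) * ((m:ℤ)+1) := by
      apply mul_nonneg (mul_nonneg (by omega) (by omega)) (by omega)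
    have expand : (sz^2+2*sz)*((m:ℤ)+1) - (m:ℤ)*((m:ℤ)+1)*((m:ℤ)+2) = (sz-(m:ℤ))*(sz+(m:ℤ)+2)*((m:ℤ)+1) := by ring
    push_cast
    linarith [key, expand]
  -- combine
  have hNpos : (0:ℝ) < (I.card : ℝ) := by
    have : 0 < I.card := Finset.card_pos.mpr (Finset.nonempty_Icc.mpr hle)
    exact_mod_cast this
  have hV : (0:ℝ) ≤ ∑ i ∈ I, v i := Finset.sum_nonneg (fun i _ => (hvpos i).le)
  have hUcast : ((∑ i ∈ I, ((n:ℤ)-2*i)^2 : ℤ) : ℝ) = ∑ i ∈ I, ((n:ℝ) - 2*i)^2 := by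
    push_cast; rfl
  have hL2R : 3 * ∑ i ∈ I, ((n:ℝ) - 2*i)^2 ≤ ((sz:ℝ)^2 + 2*sz) * (I.card : ℝ) := by
    have := hL2
    have h3 : ((3 * ∑ i ∈ I, ((n:ℤ)-2*i)^2 : ℤ):ℝ) ≤ (((sz^2 + 2*sz) * (I.card : ℤ) : ℤ):ℝ) := by
      exact_mod_cast this
    push_cast at h3
    linarith [h3]
  -- final expression for 4Σ
  have h4S : (4:ℝ) * (∑ i ∈ I, (gz i (n-i) : ℝ) * v i)
      = ((sz:ℝ)^2 + 2*sz) * (∑ i ∈ I, v i) - 3 * ∑ i ∈ I, ((n:ℝ) - 2*i)^2 * v i := by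
    have : (4:ℝ) * (∑ i ∈ I, (gz i (n-i) : ℝ) * v i)
        = 2 * (∑ i ∈ I, ((gz i (n-i) + gz (n-i) i : ℤ):ℝ) * v i) := by
      rw [← hsym]; ring
    rw [this]
    have h5 : ∀ i ∈ I, 2 * (((gz i (n-i) + gz (n-i) i : ℤ):ℝ) * v i)
        = ((sz:ℝ)^2 + 2*sz) * v i - 3 * (((n:ℝ) - 2*i)^2 * v i) := by
      intro i hi
      have h := hptwise i hi
      have hc : (2:ℝ) * ((gz i (n-i) : ℝ) + (gz (n-i) i : ℝ))
          = (sz:ℝ)^2 + 2*(sz:ℝ) - 3*((n:ℝ)-2*(i:ℝ))^2 := by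
        have h2 : ((2 * (gz i (n-i) + gz (n-i) i) : ℤ) : ℝ)
            = ((sz ^ 2 + 2 * sz - 3 * ((n:ℤ) - 2 * (i:ℤ)) ^ 2 : ℤ) : ℝ) := congrArg Int.cast h
        push_cast at h2
        linarith [h2]
      have h3 : ((gz i (n-i) + gz (n-i) i : ℤ):ℝ) = (gz i (n-i) : ℝ) + (gz (n-i) i : ℝ) := by
        push_cast; ring
      rw [h3]
      linear_combination (v i) * hc
    rw [Finset.mul_sum]
    rw [Finset.sum_congr rfl h5]
    rw [Finset.sum_sub_distrib, ← Finset.mul_sum, ← Finset.mul_sum]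
  -- chebyshev gives: card * ∑ f*v ≤ (∑ f) * (∑ v)
  have hW : (I.card : ℝ) * (3 * ∑ i ∈ I, ((n:ℝ) - 2*i)^2 * v i)
      ≤ ((sz:ℝ)^2 + 2*sz) * (I.card : ℝ) * (∑ i ∈ I, v i) := by
    calc (I.card : ℝ) * (3 * ∑ i ∈ I, ((n:ℝ) - 2*i)^2 * v i)
        = 3 * ((I.card : ℝ) * ∑ i ∈ I, ((n:ℝ) - 2*i)^2 * v i) := by ring
      _ ≤ 3 * ((∑ i ∈ I, ((n:ℝ) - 2*i)^2) * (∑ i ∈ I, v i)) := by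
          have := hcheb
          nlinarith [this, hV]
      _ ≤ ((sz:ℝ)^2 + 2*sz) * (I.card : ℝ) * (∑ i ∈ I, v i) := by
          nlinarith [hL2R, hV]
  have hfinal : 0 ≤ ∑ i ∈ I, (gz i (n-i) : ℝ) * v i := by
    nlinarith [h4S, hW, hNpos]
  -- identify with the goal
  have : ∑ i ∈ I, (((2*(((k-i)*(k-(n-i)) : ℕ):ℤ) - (((k-i)*(k-i-1) : ℕ):ℤ)) : ℤ):ℝ)
        / ((i.factorial : ℝ) * ((n-i).factorial : ℝ))
      = ∑ i ∈ I, (gz i (n-i) : ℝ) * v i := by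
    apply Finset.sum_congr rfl
    intro i _
    rw [hgz, hv]
    simp only []
    rw [div_eq_mul_one_div]
  rw [this]
  exact hfinal

private lemma keyD (k : ℕ) (y : ℝ) (hy : 0 ≤ y) :
    0 ≤ 2*(∑ i ∈ range (k+1), ((k-i : ℕ):ℝ) * y^i / (i.factorial : ℝ))^2
        - (∑ i ∈ range (k+1), (((k-i)*(k-i-1) : ℕ):ℝ) * y^i / (i.factorial : ℝ))
          * (∑ i ∈ range (k+1), y^i / (i.factorial : ℝ)) := by
  set gz : ℕ → ℕ → ℤ := fun i j => 2*(((k-i)*(k-j) : ℕ):ℤ) - (((k-i)*(k-i-1) : ℕ):ℤ) with hgz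
  set f : ℕ × ℕ → ℝ := fun p => ((gz p.1 p.2 : ℤ):ℝ) * (y^(p.1+p.2) / ((p.1.factorial : ℝ) * (p.2.factorial : ℝ))) with hf
  set sq : Finset (ℕ × ℕ) := range (k+1) ×ˢ range (k+1) with hsq
  have hstep1 : 2*(∑ i ∈ range (k+1), ((k-i : ℕ):ℝ) * y^i / (i.factorial : ℝ))^2
        - (∑ i ∈ range (k+1), (((k-i)*(k-i-1) : ℕ):ℝ) * y^i / (i.factorial : ℝ))
          * (∑ i ∈ range (k+1), y^i / (i.factorial : ℝ))
      = ∑ p ∈ sq, f p := by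
    rw [pow_two, Finset.sum_mul_sum, Finset.sum_mul_sum, hsq, Finset.sum_product]
    rw [Finset.mul_sum, ← Finset.sum_sub_distrib]
    apply Finset.sum_congr rfl
    intro i _
    rw [Finset.mul_sum, ← Finset.sum_sub_distrib]
    apply Finset.sum_congr rfl
    intro j _
    rw [hf, hgz]
    dsimp only
    push_cast
    ring
  rw [hstep1]
  rw [← Finset.sum_fiberwise_of_maps_to (g := fun p => p.1 + p.2) (t := range (2*k+1))
    (fun p hp => by
      simp only [hsq, Finset.mem_product, Finset.mem_range] at hp
      rw [Finset.mem_range]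
      omega) f]
  apply Finset.sum_nonneg
  intro n hn
  have hn2k : n ≤ 2*k := by
    have := Finset.mem_range.mp hn
    omega
  have hfib : ∑ p ∈ sq.filter (fun p => p.1+p.2 = n), f p
      = ∑ i ∈ Finset.Icc (n-k) (min n k), ((gz i (n-i) : ℤ):ℝ) * (y^n / ((i.factorial : ℝ) * ((n-i).factorial : ℝ))) := by
    refine Finset.sum_bij' (fun p _ => p.1) (fun i _ => (i, n - i)) ?_ ?_ ?_ ?_ ?_
    · intro p hp
      simp only [Finset.mem_filter, hsq, Finset.mem_product, Finset.mem_range] at hp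
      rw [Finset.mem_Icc]
      omega
    · intro i hi
      rw [Finset.mem_Icc] at hi
      simp only [Finset.mem_filter, hsq, Finset.mem_product, Finset.mem_range]
      refine ⟨⟨by omega, by omega⟩, by omega⟩
    · intro p hp
      simp only [Finset.mem_filter, hsq, Finset.mem_product, Finset.mem_range] at hp
      have : n - p.1 = p.2 := by omega
      rw [this]
    · intro i hi
      rfl
    · intro p hp
      simp only [Finset.mem_filter, hsq, Finset.mem_product, Finset.mem_range] at hp
      rw [hf]
      dsimp only
      have h1 : p.2 = n - p.1 := by omega
      have h2 : p.1 + p.2 = n := hp.2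
      rw [h2, ← h1]
  rw [hfib]
  have hfac : ∑ i ∈ Finset.Icc (n-k) (min n k), ((gz i (n-i) : ℤ):ℝ) * (y^n / ((i.factorial : ℝ) * ((n-i).factorial : ℝ)))
      = y^n * ∑ i ∈ Finset.Icc (n-k) (min n k), ((gz i (n-i) : ℤ):ℝ) / ((i.factorial : ℝ) * ((n-i).factorial : ℝ)) := by
    rw [Finset.mul_sum]
    apply Finset.sum_congr rfl
    intro i _
    ring
  rw [hfac]
  apply mul_nonneg (pow_nonneg hy n)
  exact core_coeff k n hn2k
set_option maxHeartbeats 2000000 in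
theorem stmt15 (k : ℕ) (hk : 1 ≤ k) (yfun y₁ y₂ : ℝ → ℝ)
    (hroot : ∀ x ∈ Set.Ioo (0 : ℝ) (k : ℝ), 0 < yfun x ∧
      ∑ i ∈ Finset.range (k + 1),
        ((x - (i : ℝ)) / (Nat.factorial i : ℝ)) * (yfun x) ^ i = 0)
    (hd1 : ∀ x ∈ Set.Ioo (0 : ℝ) (k : ℝ), HasDerivAt yfun (y₁ x) x)
    (hd2 : ∀ x ∈ Set.Ioo (0 : ℝ) (k : ℝ), HasDerivAt y₁ (y₂ x) x) :
    ∀ x ∈ Set.Ioo (0 : ℝ) (k : ℝ), 0 ≤ y₂ x := by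
  -- first-derivative identity on all of Ioo
  have hD1 : ∀ z ∈ Set.Ioo (0 : ℝ) (k : ℝ),
      ∑ i ∈ range (k+1), (yfun z ^ i / (i.factorial : ℝ)
        + (z - (i:ℝ)) * (i:ℝ) * yfun z ^ (i-1) * y₁ z / (i.factorial : ℝ)) = 0 := by
    intro z hz
    have hder : HasDerivAt (fun w => ∑ i ∈ range (k+1), ((w - (i : ℝ)) / (Nat.factorial i : ℝ)) * (yfun w) ^ i)
        (∑ i ∈ range (k+1), (yfun z ^ i / (i.factorial : ℝ)
          + (z - (i:ℝ)) * (i:ℝ) * yfun z ^ (i-1) * y₁ z / (i.factorial : ℝ))) z := by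
      apply HasDerivAt.fun_sum
      intro i _
      have h1 : HasDerivAt (fun w : ℝ => (w - (i:ℝ))/(Nat.factorial i : ℝ)) (1/(Nat.factorial i : ℝ)) z :=
        ((hasDerivAt_id z).sub_const _).div_const _
      have h2 : HasDerivAt (fun w => yfun w ^ i) ((i:ℝ) * yfun z ^ (i-1) * y₁ z) z :=
        (hd1 z hz).pow i
      have h := h1.fun_mul h2
      exact h.congr_deriv (by ring)
    have heq : (fun w => ∑ i ∈ range (k+1), ((w - (i : ℝ)) / (Nat.factorial i : ℝ)) * (yfun w) ^ i)
        =ᶠ[nhds z] (fun _ => (0:ℝ)) :=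
      Filter.eventuallyEq_of_mem (isOpen_Ioo.mem_nhds hz) (fun w hw => (hroot w hw).2)
    have h0 : HasDerivAt (fun w => ∑ i ∈ range (k+1), ((w - (i : ℝ)) / (Nat.factorial i : ℝ)) * (yfun w) ^ i)
        0 z := (hasDerivAt_const z 0).congr_of_eventuallyEq heq
    exact hder.unique h0
  -- second-derivative identity
  have hD2 : ∀ z ∈ Set.Ioo (0 : ℝ) (k : ℝ),
      ∑ i ∈ range (k+1), (2 * (i:ℝ) * yfun z ^ (i-1) * y₁ z / (i.factorial : ℝ)
        + (z - (i:ℝ)) * ((i:ℝ) * ((i-1 : ℕ):ℝ) * yfun z ^ (i-1-1) * (y₁ z)^2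
            + (i:ℝ) * yfun z ^ (i-1) * y₂ z) / (i.factorial : ℝ)) = 0 := by
    intro z hz
    have hder : HasDerivAt (fun w => ∑ i ∈ range (k+1), (yfun w ^ i / (i.factorial : ℝ)
          + (w - (i:ℝ)) * (i:ℝ) * yfun w ^ (i-1) * y₁ w / (i.factorial : ℝ)))
        (∑ i ∈ range (k+1), (2 * (i:ℝ) * yfun z ^ (i-1) * y₁ z / (i.factorial : ℝ)
          + (z - (i:ℝ)) * ((i:ℝ) * ((i-1 : ℕ):ℝ) * yfun z ^ (i-1-1) * (y₁ z)^2
              + (i:ℝ) * yfun z ^ (i-1) * y₂ z) / (i.factorial : ℝ))) z := by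
      apply HasDerivAt.fun_sum
      intro i _
      have hA : HasDerivAt (fun w => yfun w ^ i / (i.factorial : ℝ))
          (((i:ℝ) * yfun z ^ (i-1) * y₁ z) / (i.factorial : ℝ)) z :=
        ((hd1 z hz).pow i).div_const _
      have hlin : HasDerivAt (fun w : ℝ => (w - (i:ℝ)) * (i:ℝ)) (1 * (i:ℝ)) z :=
        ((hasDerivAt_id z).sub_const _).mul_const _
      have hpow : HasDerivAt (fun w => yfun w ^ (i-1))
          (((i-1 : ℕ):ℝ) * yfun z ^ (i-1-1) * y₁ z) z := (hd1 z hz).pow (i-1)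
      have hB := (hlin.fun_mul hpow).fun_mul (hd2 z hz)
      have hB' := hB.div_const (Nat.factorial i : ℝ)
      have h := hA.fun_add hB'
      convert h using 1
      ring
    have heq : (fun w => ∑ i ∈ range (k+1), (yfun w ^ i / (i.factorial : ℝ)
          + (w - (i:ℝ)) * (i:ℝ) * yfun w ^ (i-1) * y₁ w / (i.factorial : ℝ)))
        =ᶠ[nhds z] (fun _ => (0:ℝ)) :=
      Filter.eventuallyEq_of_mem (isOpen_Ioo.mem_nhds hz) (fun w hw => hD1 w hw)
    have h0 : HasDerivAt (fun w => ∑ i ∈ range (k+1), (yfun w ^ i / (i.factorial : ℝ)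
          + (w - (i:ℝ)) * (i:ℝ) * yfun w ^ (i-1) * y₁ w / (i.factorial : ℝ)))
        0 z := (hasDerivAt_const z 0).congr_of_eventuallyEq heq
    exact hder.unique h0
  -- now fix x
  intro x hx
  obtain ⟨hy0, hroot0⟩ := hroot x hx
  have R1 := hD1 x hx
  have R2 := hD2 x hx
  set y : ℝ := yfun x with hydef
  set p : ℝ := y₁ x with hpdef
  set q : ℝ := y₂ x with hqdef
  -- power helper lemmas
  have hpow1 : ∀ i : ℕ, (i:ℝ) * y^(i-1) * y = (i:ℝ) * y^i := by
    intro i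
    cases i with
    | zero => simp
    | succ n => rw [show n+1-1 = n from rfl, pow_succ]; push_cast; ring
  have hpow1b : ∀ i : ℕ, (i:ℝ) * y^(i-1) * y^2 = (i:ℝ) * y^(i+1) := by
    intro i
    cases i with
    | zero => simp
    | succ n => rw [show n+1-1 = n from rfl, show y^(n+1+1) = y^n * y^2 by ring]; push_cast; ring
  have hpow2 : ∀ i : ℕ, (i:ℝ) * ((i-1 : ℕ):ℝ) * y^(i-1-1) * y^2 = (i:ℝ) * ((i:ℝ)-1) * y^i := by
    intro i
    match i with
    | 0 => simp
    | 1 => simp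
    | (n+2) =>
      rw [show n+2-1-1 = n from rfl, show ((n+2-1 : ℕ):ℝ) = (n:ℝ)+1 by push_cast; ring,
        show y^(n+2) = y^n * y^2 by ring]
      push_cast; ring
  -- basic sums
  set S : ℝ := ∑ i ∈ range (k+1), y^i / (i.factorial : ℝ) with hSdef
  set P1 : ℝ := ∑ i ∈ range (k+1), (i:ℝ) * y^i / (i.factorial : ℝ) with hP1def
  set P2 : ℝ := ∑ i ∈ range (k+1), (i:ℝ)^2 * y^i / (i.factorial : ℝ) with hP2def
  set P3 : ℝ := ∑ i ∈ range (k+1), (i:ℝ)^3 * y^i / (i.factorial : ℝ) with hP3def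
  set Rk : ℝ := y^k / (k.factorial : ℝ) with hRkdef
  set Asum : ℝ := ∑ i ∈ range (k+1), ((k-i : ℕ):ℝ) * y^i / (i.factorial : ℝ) with hAdef
  set Csum : ℝ := ∑ i ∈ range (k+1), (((k-i)*(k-i-1) : ℕ):ℝ) * y^i / (i.factorial : ℝ) with hCdef
  have hSpos : 0 < S := by
    rw [hSdef]
    apply Finset.sum_pos
    · intro i _
      positivity
    · exact ⟨0, Finset.mem_range.mpr (by omega)⟩
  have hRkpos : 0 < Rk := by rw [hRkdef]; positivity
  -- R0 in algebraic form
  have hE0 : x * S = P1 := by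
    have h1 : ∑ i ∈ range (k+1), ((x - (i : ℝ)) / (Nat.factorial i : ℝ)) * y ^ i
        = x * S - P1 := by
      rw [hSdef, hP1def, Finset.mul_sum, ← Finset.sum_sub_distrib]
      apply Finset.sum_congr rfl
      intro i _
      ring
    rw [h1] at hroot0
    linarith
  -- R1 in algebraic form
  have hE1 : y * S + p * x * P1 - p * P2 = 0 := by
    have h1 : y * ∑ i ∈ range (k+1), (y ^ i / (i.factorial : ℝ)
        + (x - (i:ℝ)) * (i:ℝ) * y ^ (i-1) * p / (i.factorial : ℝ)) = 0 := by
      rw [R1, mul_zero]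
    have h2 : ∀ i ∈ range (k+1), y * (y ^ i / (i.factorial : ℝ)
          + (x - (i:ℝ)) * (i:ℝ) * y ^ (i-1) * p / (i.factorial : ℝ))
        = y * (y^i / (i.factorial : ℝ)) + (p*x) * ((i:ℝ) * y^i / (i.factorial : ℝ))
          - p * ((i:ℝ)^2 * y^i / (i.factorial : ℝ)) := by
      intro i _
      linear_combination ((x - (i:ℝ)) * p / (i.factorial : ℝ)) * hpow1 i
    rw [Finset.mul_sum, Finset.sum_congr rfl h2, Finset.sum_sub_distrib, Finset.sum_add_distrib,
      ← Finset.mul_sum, ← Finset.mul_sum, ← Finset.mul_sum] at h1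
    rw [hSdef, hP1def, hP2def]
    linarith [h1]
  -- R2 in algebraic form
  have hE2 : (2*p*y + q*y*x - p^2*x) * P1 + (p^2*x + p^2 - q*y) * P2 - p^2 * P3 = 0 := by
    have h1 : y^2 * ∑ i ∈ range (k+1), (2 * (i:ℝ) * y ^ (i-1) * p / (i.factorial : ℝ)
        + (x - (i:ℝ)) * ((i:ℝ) * ((i-1 : ℕ):ℝ) * y ^ (i-1-1) * p^2
            + (i:ℝ) * y ^ (i-1) * q) / (i.factorial : ℝ)) = 0 := by
      rw [R2, mul_zero]
    have h2 : ∀ i ∈ range (k+1), y^2 * (2 * (i:ℝ) * y ^ (i-1) * p / (i.factorial : ℝ)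
          + (x - (i:ℝ)) * ((i:ℝ) * ((i-1 : ℕ):ℝ) * y ^ (i-1-1) * p^2
              + (i:ℝ) * y ^ (i-1) * q) / (i.factorial : ℝ))
        = (2*p*y + q*y*x - p^2*x) * ((i:ℝ) * y^i / (i.factorial : ℝ))
          + (p^2*x + p^2 - q*y) * ((i:ℝ)^2 * y^i / (i.factorial : ℝ))
          - p^2 * ((i:ℝ)^3 * y^i / (i.factorial : ℝ)) := by
      intro i _
      have e1 := hpow1b i
      have e2 := hpow2 i
      have e3 : (i:ℝ) * y^(i+1) = (i:ℝ) * y^i * y := by ring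
      linear_combination ((2*p + (x - (i:ℝ))*q) / (i.factorial : ℝ)) * e1
        + ((x - (i:ℝ)) * p^2 / (i.factorial : ℝ)) * e2
        + ((2*p + (x - (i:ℝ))*q) / (i.factorial : ℝ)) * e3
    rw [Finset.mul_sum, Finset.sum_congr rfl h2, Finset.sum_sub_distrib, Finset.sum_add_distrib,
      ← Finset.mul_sum, ← Finset.mul_sum, ← Finset.mul_sum] at h1
    rw [hP1def, hP2def, hP3def]
    linarith [h1]
  -- strict Cauchy-Schwarz : P1^2 < P2 * S
  have hCS : P1^2 < P2 * S := by
    have h1 : P2 * S - P1 * P1 = ∑ i ∈ range (k+1), ∑ j ∈ range (k+1),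
        ((i:ℝ)^2 - (i:ℝ)*(j:ℝ)) * ((y^i/(i.factorial : ℝ)) * (y^j/(j.factorial : ℝ))) := by
      rw [hP1def, hP2def, hSdef, Finset.sum_mul_sum, Finset.sum_mul_sum, ← Finset.sum_sub_distrib]
      apply Finset.sum_congr rfl
      intro i _
      rw [← Finset.sum_sub_distrib]
      apply Finset.sum_congr rfl
      intro j _
      ring
    have h2 : P2 * S - P1 * P1 = ∑ i ∈ range (k+1), ∑ j ∈ range (k+1),
        ((j:ℝ)^2 - (j:ℝ)*(i:ℝ)) * ((y^i/(i.factorial : ℝ)) * (y^j/(j.factorial : ℝ))) := by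
      rw [h1, Finset.sum_comm]
      apply Finset.sum_congr rfl
      intro i _
      apply Finset.sum_congr rfl
      intro j _
      ring
    have h3 : 2 * (P2 * S - P1 * P1) = ∑ i ∈ range (k+1), ∑ j ∈ range (k+1),
        ((i:ℝ) - (j:ℝ))^2 * ((y^i/(i.factorial : ℝ)) * (y^j/(j.factorial : ℝ))) := by
      rw [two_mul]
      nth_rewrite 1 [h1]
      nth_rewrite 1 [h2]
      rw [← Finset.sum_add_distrib]
      apply Finset.sum_congr rfl
      intro i _
      rw [← Finset.sum_add_distrib]
      apply Finset.sum_congr rfl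
      intro j _
      ring
    have h4 : 0 < ∑ i ∈ range (k+1), ∑ j ∈ range (k+1),
        ((i:ℝ) - (j:ℝ))^2 * ((y^i/(i.factorial : ℝ)) * (y^j/(j.factorial : ℝ))) := by
      apply Finset.sum_pos'
      · intro i _
        apply Finset.sum_nonneg
        intro j _
        have : (0:ℝ) < (y^i/(i.factorial : ℝ)) * (y^j/(j.factorial : ℝ)) := by positivity
        positivity
      · refine ⟨0, Finset.mem_range.mpr (by omega), ?_⟩
        apply Finset.sum_pos'
        · intro j _
          have : (0:ℝ) < (y^(0:ℕ)/((0:ℕ).factorial : ℝ)) * (y^j/(j.factorial : ℝ)) := by positivity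
          positivity
        · refine ⟨1, Finset.mem_range.mpr (by omega), ?_⟩
          have h01 : (((0:ℕ):ℝ) - ((1:ℕ):ℝ))^2 = 1 := by norm_num
          have hterm : (0:ℝ) < (y^(0:ℕ)/((0:ℕ).factorial : ℝ)) * (y^(1:ℕ)/((1:ℕ).factorial : ℝ)) := by
            positivity
          calc (0:ℝ) < (y^(0:ℕ)/((0:ℕ).factorial : ℝ)) * (y^(1:ℕ)/((1:ℕ).factorial : ℝ)) := hterm
            _ = (((0:ℕ):ℝ) - ((1:ℕ):ℝ))^2 * ((y^(0:ℕ)/((0:ℕ).factorial : ℝ)) * (y^(1:ℕ)/((1:ℕ).factorial : ℝ))) := by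
                rw [h01, one_mul]
    have h5 : P1^2 = P1*P1 := by ring
    linarith [h3, h4, h5]
  -- reindexing lemmas
  have hfaccast : ∀ i : ℕ, ((i+1).factorial : ℝ) = ((i:ℝ)+1) * (i.factorial : ℝ) := by
    intro i
    rw [Nat.factorial_succ]
    push_cast
    ring
  have hfacne : ∀ i : ℕ, (i.factorial : ℝ) ≠ 0 := by
    intro i
    exact_mod_cast (Nat.factorial_pos i).ne'
  have hSk : ∑ i ∈ range k, y^i / (i.factorial : ℝ) = S - Rk := by
    have := Finset.sum_range_succ (fun i => y^i / (i.factorial : ℝ)) k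
    rw [hSdef, hRkdef]
    rw [this]
    ring
  have hP1' : P1 = y * (S - Rk) := by
    rw [hP1def, Finset.sum_range_succ']
    have h1 : ∀ i ∈ range k, ((i+1 : ℕ):ℝ) * y^(i+1) / ((i+1).factorial : ℝ)
        = y * (y^i / (i.factorial : ℝ)) := by
      intro i _
      rw [hfaccast i, pow_succ]
      have h2 := hfacne i
      have h3 : ((i:ℝ)+1) ≠ 0 := by positivity
      field_simp
      push_cast
      ring
    rw [Finset.sum_congr rfl h1]
    simp only [Nat.cast_zero, zero_mul, pow_zero, Nat.factorial_zero, Nat.cast_one, zero_div, add_zero]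
    rw [← Finset.mul_sum, hSk]
  have hplus1 : ∑ i ∈ range (k+1), ((i:ℝ)+1) * y^i / (i.factorial : ℝ) = P1 + S := by
    rw [hP1def, hSdef, ← Finset.sum_add_distrib]
    apply Finset.sum_congr rfl
    intro i _
    ring
  have hP2' : P2 = y * (P1 + S - ((k:ℝ)+1) * Rk) := by
    rw [hP2def, Finset.sum_range_succ']
    have h1 : ∀ i ∈ range k, ((i+1 : ℕ):ℝ)^2 * y^(i+1) / ((i+1).factorial : ℝ)
        = y * (((i:ℝ)+1) * y^i / (i.factorial : ℝ)) := by
      intro i _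
      rw [hfaccast i, pow_succ]
      have h2 := hfacne i
      have h3 : ((i:ℝ)+1) ≠ 0 := by positivity
      field_simp
      push_cast
      ring
    rw [Finset.sum_congr rfl h1]
    simp only [Nat.cast_zero, zero_pow, pow_zero, Nat.factorial_zero, Nat.cast_one, zero_div, add_zero,
      ne_eq, OfNat.ofNat_ne_zero, not_false_eq_true, zero_mul]
    rw [← Finset.mul_sum]
    have h4 : ∑ i ∈ range k, ((i:ℝ)+1) * y^i / (i.factorial : ℝ)
        = P1 + S - ((k:ℝ)+1) * Rk := by
      have h5 := Finset.sum_range_succ (fun i => ((i:ℝ)+1) * y^i / (i.factorial : ℝ)) k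
      rw [hplus1] at h5
      rw [hRkdef]
      have h6 : ((k:ℝ)+1) * (y^k / (k.factorial : ℝ)) = ((k:ℝ)+1) * y^k / (k.factorial : ℝ) := by ring
      linarith [h5]
    rw [h4]
  have hplus2 : ∑ i ∈ range (k+1), ((i:ℝ)+1)^2 * y^i / (i.factorial : ℝ) = P2 + 2*P1 + S := by
    rw [hP1def, hP2def, hSdef, Finset.mul_sum, ← Finset.sum_add_distrib, ← Finset.sum_add_distrib]
    apply Finset.sum_congr rfl
    intro i _
    ring
  have hP3' : P3 = y * (P2 + 2*P1 + S - ((k:ℝ)+1)^2 * Rk) := by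
    rw [hP3def, Finset.sum_range_succ']
    have h1 : ∀ i ∈ range k, ((i+1 : ℕ):ℝ)^3 * y^(i+1) / ((i+1).factorial : ℝ)
        = y * (((i:ℝ)+1)^2 * y^i / (i.factorial : ℝ)) := by
      intro i _
      rw [hfaccast i, pow_succ]
      have h2 := hfacne i
      have h3 : ((i:ℝ)+1) ≠ 0 := by positivity
      field_simp
      push_cast
      ring
    rw [Finset.sum_congr rfl h1]
    simp only [Nat.cast_zero, zero_pow, pow_zero, Nat.factorial_zero, Nat.cast_one, zero_div, add_zero,
      ne_eq, OfNat.ofNat_ne_zero, not_false_eq_true, zero_mul]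
    rw [← Finset.mul_sum]
    have h4 : ∑ i ∈ range k, ((i:ℝ)+1)^2 * y^i / (i.factorial : ℝ)
        = P2 + 2*P1 + S - ((k:ℝ)+1)^2 * Rk := by
      have h5 := Finset.sum_range_succ (fun i => ((i:ℝ)+1)^2 * y^i / (i.factorial : ℝ)) k
      rw [hplus2] at h5
      rw [hRkdef]
      have h6 : ((k:ℝ)+1)^2 * (y^k / (k.factorial : ℝ)) = ((k:ℝ)+1)^2 * y^k / (k.factorial : ℝ) := by ring
      linarith [h5]
    rw [h4]
  have hA' : Asum = (k:ℝ) * S - P1 := by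
    rw [hAdef, hSdef, hP1def, Finset.mul_sum, ← Finset.sum_sub_distrib]
    apply Finset.sum_congr rfl
    intro i hi
    have hik : i ≤ k := by
      have := Finset.mem_range.mp hi
      omega
    rw [Nat.cast_sub hik]
    ring
  have hC' : Csum = (k:ℝ)*((k:ℝ)-1) * S - (2*(k:ℝ)-1) * P1 + P2 := by
    rw [hCdef, hSdef, hP1def, hP2def, Finset.mul_sum, Finset.mul_sum, ← Finset.sum_sub_distrib,
      ← Finset.sum_add_distrib]
    apply Finset.sum_congr rfl
    intro i hi
    have hik : i ≤ k := by
      have := Finset.mem_range.mp hi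
      omega
    rw [cast_mul_pred_real (k-i), Nat.cast_sub hik]
    ring
  -- final algebra
  have hDq : 0 ≤ 2*Asum^2 - Csum*S := by
    rw [hAdef, hCdef, hSdef]
    exact keyD k y hy0.le
  clear_value S P1 P2 P3 Rk Asum Csum y p q
  have hm : (x*P1 - P2) * S = P1^2 - P2*S := by linear_combination P1 * hE0
  have hmneg : x*P1 - P2 < 0 := by nlinarith [hm, hCS, hSpos]
  have hppos : 0 < p := by nlinarith [hE1, mul_pos hy0 hSpos, hmneg]
  have hpm : p * (x*P1 - P2) = -(y*S) := by linear_combination hE1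
  have hkey : S * (S*(x*(P2-P1) - (P3-P2)) - 2*P1*(x*P1 - P2))
      = 3*P1*P2*S - P1^2*S - P3*S^2 + P2*S^2 - 2*P1^3 := by
    linear_combination ((P2 - P1)*S - 2*P1^2) * hE0
  have hED : 3*P1*P2*S - P1^2*S - P3*S^2 + P2*S^2 - 2*P1^3
      = y * Rk * (2*Asum^2 - Csum*S) := by
    rw [hA', hC', hP3', hP2', hP1']
    ring
  have hnn2 : 0 ≤ S*(x*(P2-P1) - (P3-P2)) - 2*P1*(x*P1 - P2) := by
    have h1 : 0 ≤ S * (S*(x*(P2-P1) - (P3-P2)) - 2*P1*(x*P1 - P2)) := by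
      rw [hkey, hED]
      exact mul_nonneg (mul_nonneg hy0.le hRkpos.le) hDq
    exact (mul_nonneg_iff_of_pos_left hSpos).mp h1
  have h6 : S * (p*(x*(P2-P1) - (P3-P2)) + 2*y*P1) = p * (S*(x*(P2-P1) - (P3-P2)) - 2*P1*(x*P1 - P2)) := by
    linear_combination (2*P1) * hpm
  have h7 : 0 ≤ p*(x*(P2-P1) - (P3-P2)) + 2*y*P1 := by
    have h8 : 0 ≤ S * (p*(x*(P2-P1) - (P3-P2)) + 2*y*P1) := by
      rw [h6]
      exact mul_nonneg hppos.le hnn2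
    exact (mul_nonneg_iff_of_pos_left hSpos).mp h8
  have hym : y*(x*P1 - P2) < 0 := mul_neg_of_pos_of_neg hy0 hmneg
  have h8 : q * (y*(x*P1 - P2)) = -(p * (p*(x*(P2-P1) - (P3-P2)) + 2*y*P1)) := by
    linear_combination hE2
  have h9 : 0 ≤ p * (p*(x*(P2-P1) - (P3-P2)) + 2*y*P1) := mul_nonneg hppos.le h7
  have h10 : 0 ≤ q * (-(y*(x*P1 - P2))) := by linarith [h8, h9]
  exact (mul_nonneg_iff_of_pos_right (neg_pos.mpr hym)).mp h10
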